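/- Let β = 1 - α, π₀₀ = (1-2α)/(2α³-4α²+1), r_b^s = α - αβ²(1-γ)π₀₀, and r_b^h = β(π₀₀ + (α-α²)π₀₀) + β²(1-γ)απ₀₀. Then r_b^s + r_b^h ≤ 1 for all α ∈ (0, 1/2) and γ ∈ [0, 1]. -/
import Mathlib

theorem stmt_3 (α γ : ℝ) (h0 : 0 < α) (h1 : α < 1/2) (hγ0 : 0 ≤ γ) (hγ1 : γ ≤ 1)
    (β : ℝ) (hβ : β = 1 - α)
    (π00 : ℝ) (hπ : π00 = (1 - 2*α) / (2*α^3 - 4*α^2 + 1))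
    (rbs : ℝ) (hs : rbs = α - α * β^2 * (1 - γ) * π00)
    (rbh : ℝ) (hh : rbh = β * (π00 + (α - α^2) * π00) + β^2 * (1 - γ) * α * π00) :
    rbs + rbh ≤ 1 := by
  have hD : 0 < 2*α^3 - 4*α^2 + 1 := by nlinarith
  subst hβ hπ hs hh
  rw [div_eq_mul_inv]
  have hinv : 0 < (2*α^3 - 4*α^2 + 1)⁻¹ := inv_pos.mpr hD
  have hmul : (2*α^3 - 4*α^2 + 1) * (2*α^3 - 4*α^2 + 1)⁻¹ = 1 := mul_inv_cancel₀ (ne_of_gt hD)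
  nlinarith [mul_pos h0 hinv, mul_nonneg (mul_nonneg h0.le hγ0) hinv.le]
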